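/- Let θ_t and ϑ_t be two sequences in a normed vector space with θ_0 = ϑ_0, where ϑ_{t+1} = ϑ_t - η_t ∇L_t(ϑ_t) and θ_{t+1} = θ_t - η_t ∇L_t(θ_t) - η'_t g_t(θ_t - η_t ∇L_t(θ_t)), with each ∇L_t being β_t-Lipschitz and ‖g_t(·)‖ ≤ G_t everywhere, and η_t, η'_t, β_t, G_t ≥ 0. Then ‖θ_T - ϑ_T‖ ≤ exp(∑_{s<T} η_s β_s) · ∑_{t<T} η'_t G_t. -/
import Mathlib


open Finset

/-- Identically initialized gradient descent with and without a bounded per-round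
perturbation step: the trajectories drift apart by at most
`exp (∑_{s<T} η_s β_s) * ∑_{t<T} η'_t G_t`. -/
theorem perturbed_gd_bounded_drift {V : Type*} [NormedAddCommGroup V] [NormedSpace ℝ V]
    (θ ϑ : ℕ → V) (gradL g : ℕ → V → V) (η η' β G : ℕ → ℝ)
    (hη : ∀ t, 0 ≤ η t) (hη' : ∀ t, 0 ≤ η' t) (hβ : ∀ t, 0 ≤ β t) (hG : ∀ t, 0 ≤ G t)
    (hlip : ∀ t x y, ‖gradL t x - gradL t y‖ ≤ β t * ‖x - y‖)
    (hbound : ∀ t x, ‖g t x‖ ≤ G t)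
    (h0 : θ 0 = ϑ 0)
    (hϑ : ∀ t, ϑ (t + 1) = ϑ t - η t • gradL t (ϑ t))
    (hθ : ∀ t, θ (t + 1) =
      θ t - η t • gradL t (θ t) - η' t • g t (θ t - η t • gradL t (θ t)))
    (T : ℕ) :
    ‖θ T - ϑ T‖ ≤ Real.exp (∑ s ∈ range T, η s * β s) * ∑ t ∈ range T, η' t * G t := by
  induction T with
  | zero => simp [h0]
  | succ t ih =>
    have hsum : (0:ℝ) ≤ ∑ x ∈ range t, η' x * G x :=
      Finset.sum_nonneg fun i _ => mul_nonneg (hη' i) (hG i)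
    have hstep : ‖θ (t+1) - ϑ (t+1)‖ ≤
        (1 + η t * β t) * ‖θ t - ϑ t‖ + η' t * G t := by
      rw [hθ t, hϑ t]
      have key : θ t - η t • gradL t (θ t) - η' t • g t (θ t - η t • gradL t (θ t))
          - (ϑ t - η t • gradL t (ϑ t))
          = ((θ t - ϑ t) - η t • (gradL t (θ t) - gradL t (ϑ t)))
            - η' t • g t (θ t - η t • gradL t (θ t)) := by
        module
      rw [key]
      calc ‖((θ t - ϑ t) - η t • (gradL t (θ t) - gradL t (ϑ t)))
            - η' t • g t (θ t - η t • gradL t (θ t))‖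
          ≤ ‖(θ t - ϑ t) - η t • (gradL t (θ t) - gradL t (ϑ t))‖
            + ‖η' t • g t (θ t - η t • gradL t (θ t))‖ := norm_sub_le _ _
        _ ≤ (‖θ t - ϑ t‖ + η t * (β t * ‖θ t - ϑ t‖)) + η' t * G t := by
            gcongr
            · calc ‖(θ t - ϑ t) - η t • (gradL t (θ t) - gradL t (ϑ t))‖
                  ≤ ‖θ t - ϑ t‖ + ‖η t • (gradL t (θ t) - gradL t (ϑ t))‖ :=
                    norm_sub_le _ _
                _ ≤ ‖θ t - ϑ t‖ + η t * (β t * ‖θ t - ϑ t‖) := by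
                    gcongr
                    rw [norm_smul, Real.norm_of_nonneg (hη t)]
                    exact mul_le_mul_of_nonneg_left (hlip t _ _) (hη t)
            · rw [norm_smul, Real.norm_of_nonneg (hη' t)]
              exact mul_le_mul_of_nonneg_left (hbound t _) (hη' t)
        _ = (1 + η t * β t) * ‖θ t - ϑ t‖ + η' t * G t := by ring
    have h1 : (1 + η t * β t) ≤ Real.exp (η t * β t) :=
      Real.add_one_le_exp _ |>.trans_eq' (by ring)
    have hE : (1:ℝ) ≤ Real.exp (∑ s ∈ range (t+1), η s * β s) :=
      Real.one_le_exp (Finset.sum_nonneg fun i _ => mul_nonneg (hη i) (hβ i))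
    calc ‖θ (t+1) - ϑ (t+1)‖
        ≤ (1 + η t * β t) * ‖θ t - ϑ t‖ + η' t * G t := hstep
      _ ≤ Real.exp (η t * β t) *
            (Real.exp (∑ s ∈ range t, η s * β s) * ∑ x ∈ range t, η' x * G x)
            + η' t * G t := by
          have := mul_le_mul h1 ih (norm_nonneg _) (Real.exp_pos _).le
          linarith
      _ ≤ Real.exp (∑ s ∈ range (t+1), η s * β s) * ∑ x ∈ range t, η' x * G x
            + Real.exp (∑ s ∈ range (t+1), η s * β s) * (η' t * G t) := by
          have e1 : Real.exp (η t * β t) *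
              (Real.exp (∑ s ∈ range t, η s * β s) * ∑ x ∈ range t, η' x * G x)
              = Real.exp (∑ s ∈ range (t+1), η s * β s) * ∑ x ∈ range t, η' x * G x := by
            rw [Finset.sum_range_succ, Real.exp_add]; ring
          have e2 : η' t * G t ≤
              Real.exp (∑ s ∈ range (t+1), η s * β s) * (η' t * G t) :=
            le_mul_of_one_le_left (mul_nonneg (hη' t) (hG t)) hE
          linarith [e2, e1.le, e1.ge]
      _ = Real.exp (∑ s ∈ range (t+1), η s * β s) * ∑ x ∈ range (t+1), η' x * G x := by
          rw [Finset.sum_range_succ (fun x => η' x * G x)]; ring
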